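/- Let H : ℤ² → ℤ be harmonic on all of ℤ², let Γ ⊂ ℤ² be a finite nonempty convex domain, and let n ≥ 2 be an integer. Assume that the values {H(v) : v ∈ Γ} have greatest common divisor 1, and that n divides H(w) for every w ∈ ∂(ℤ² \ Γ). Then n divides (Δ_Γ(H|_Γ))(v) for every v ∈ Γ, and the element C = [−(1/n)·Δ_Γ(H|_Γ)] of the sandpile group G_Γ has order exactly n; in particular, G_Γ contains a cyclic subgroup {0, C, …, (n−1)C} of order n. -/
import Mathlib


/-- Two vertices of `ℤ²` are adjacent iff their Euclidean distance is `1`. -/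
def adj (u v : ℤ × ℤ) : Prop := (u.1 - v.1) ^ 2 + (u.2 - v.2) ^ 2 = 1

instance : DecidableRel adj := fun u v => by unfold adj; infer_instance

/-- The reduced Laplacian of a finite domain `Γ ⊂ ℤ²`. -/
def lap {R : Type*} [CommRing R] (Γ : Finset (ℤ × ℤ)) (f : ↥Γ → R) : ↥Γ → R :=
  fun v => (∑ w ∈ Γ.attach.filter (fun w => adj w.1 v.1), f w) - 4 * f v

lemma lap_add {R : Type*} [CommRing R] (Γ : Finset (ℤ × ℤ)) (f g : ↥Γ → R) :
    lap Γ (f + g) = lap Γ f + lap Γ g := by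
  funext v; simp [lap, Finset.sum_add_distrib]; ring

lemma lap_neg {R : Type*} [CommRing R] (Γ : Finset (ℤ × ℤ)) (f : ↥Γ → R) :
    lap Γ (-f) = -(lap Γ f) := by
  funext v; simp [lap]; ring

lemma lap_smul {R : Type*} [CommRing R] (Γ : Finset (ℤ × ℤ)) (c : R) (f : ↥Γ → R) :
    lap Γ (c • f) = c • lap Γ f := by
  funext v
  simp only [lap, Pi.smul_apply, smul_eq_mul, mul_sub, Finset.mul_sum]
  ring

lemma lap_zero {R : Type*} [CommRing R] (Γ : Finset (ℤ × ℤ)) :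
    lap Γ (0 : ↥Γ → R) = 0 := by
  funext v; simp [lap]

/-- The boundary `∂Γ`: vertices of `Γ` adjacent to some vertex of `ℤ² \ Γ`. -/
noncomputable def boundary (Γ : Finset (ℤ × ℤ)) : Finset (ℤ × ℤ) :=
  @Finset.filter _ (fun v => ∃ w : ℤ × ℤ, w ∉ Γ ∧ adj w v) (Classical.decPred _) Γ

lemma boundary_subset (Γ : Finset (ℤ × ℤ)) : boundary Γ ⊆ Γ :=
  @Finset.filter_subset _ (fun v => ∃ w : ℤ × ℤ, w ∉ Γ ∧ adj w v) (Classical.decPred _) Γ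

/-- A function on `Γ` is harmonic if its Laplacian vanishes on the interior `Γ \ ∂Γ`. -/
def Harmonic {R : Type*} [CommRing R] (Γ : Finset (ℤ × ℤ)) (f : ↥Γ → R) : Prop :=
  ∀ v : ↥Γ, (v : ℤ × ℤ) ∉ boundary Γ → lap Γ f v = 0

/-- `Γ ⊂ ℤ²` is a convex domain if it is the set of lattice points of a
convex open subset of `ℝ²`. -/
def IsConvexDomain (Γ : Finset (ℤ × ℤ)) : Prop :=
  ∃ P : Set (ℝ × ℝ), Convex ℝ P ∧ IsOpen P ∧
    ∀ v : ℤ × ℤ, v ∈ Γ ↔ ((v.1 : ℝ), (v.2 : ℝ)) ∈ P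

/-- The reduced Laplacian as an additive group homomorphism on `ℤ^Γ`. -/
def lapHom (Γ : Finset (ℤ × ℤ)) : (↥Γ → ℤ) →+ (↥Γ → ℤ) where
  toFun := lap Γ
  map_zero' := lap_zero Γ
  map_add' := lap_add Γ

/-- The sandpile group `G_Γ = ℤ^Γ / Δ_Γ(ℤ^Γ)`. -/
def SandpileGroup (Γ : Finset (ℤ × ℤ)) : Type :=
  (↥Γ → ℤ) ⧸ (lapHom Γ).range

instance (Γ : Finset (ℤ × ℤ)) : AddCommGroup (SandpileGroup Γ) :=
  inferInstanceAs (AddCommGroup ((↥Γ → ℤ) ⧸ (lapHom Γ).range))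

/-- The canonical projection `ℤ^Γ → G_Γ`. -/
def sandMk (Γ : Finset (ℤ × ℤ)) : (↥Γ → ℤ) →+ SandpileGroup Γ :=
  QuotientAddGroup.mk' _

/-- A function `H : ℤ² → ℤ` is harmonic on all of `ℤ²` if for every vertex the
sum of `H` over its neighbors equals `4·H(v)`. -/
def HarmonicZ2 (H : ℤ × ℤ → ℤ) : Prop :=
  ∀ v : ℤ × ℤ, (∑ᶠ w ∈ {w : ℤ × ℤ | adj w v}, H w) = 4 * H v


/-- The four lattice neighbors of a vertex. -/
def nbrs (v : ℤ × ℤ) : Finset (ℤ × ℤ) := {(v.1+1, v.2), (v.1-1, v.2), (v.1, v.2+1), (v.1, v.2-1)}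

lemma adj_iff (w v : ℤ × ℤ) : adj w v ↔ w ∈ nbrs v := by
  unfold adj nbrs
  constructor
  · intro h
    have h1 : -1 ≤ w.1 - v.1 ∧ w.1 - v.1 ≤ 1 := by
      constructor <;>
        nlinarith [sq_nonneg (w.2 - v.2), sq_nonneg (w.1 - v.1 + 1), sq_nonneg (w.1 - v.1 - 1)]
    have h2 : -1 ≤ w.2 - v.2 ∧ w.2 - v.2 ≤ 1 := by
      constructor <;>
        nlinarith [sq_nonneg (w.1 - v.1), sq_nonneg (w.2 - v.2 + 1), sq_nonneg (w.2 - v.2 - 1)]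
    have ha : w.1 - v.1 = -1 ∨ w.1 - v.1 = 0 ∨ w.1 - v.1 = 1 := by omega
    have hb : w.2 - v.2 = -1 ∨ w.2 - v.2 = 0 ∨ w.2 - v.2 = 1 := by omega
    simp only [Finset.mem_insert, Finset.mem_singleton, Prod.ext_iff]
    rcases ha with ha|ha|ha <;> rcases hb with hb|hb|hb <;> rw [ha, hb] at h <;>
      norm_num at h <;> omega
  · intro h
    simp only [Finset.mem_insert, Finset.mem_singleton] at h
    rcases h with h|h|h|h <;> subst h <;> ring

lemma lap_eq (Γ : Finset (ℤ × ℤ)) (F : ℤ × ℤ → ℤ) (v : ↥Γ) :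
    lap Γ (fun w : ↥Γ => F w.1) v
      = (∑ w ∈ (nbrs v.1).filter (· ∈ Γ), F w) - 4 * F v.1 := by
  unfold lap
  congr 1
  rw [Finset.sum_filter, Finset.sum_attach Γ (fun w => if adj w v.1 then F w else 0),
    ← Finset.sum_filter]
  apply Finset.sum_congr _ (fun _ _ => rfl)
  ext w
  simp only [Finset.mem_filter, adj_iff]
  tauto

lemma harm_sum (H : ℤ × ℤ → ℤ) (hH : HarmonicZ2 H) (v : ℤ × ℤ) :
    ∑ w ∈ nbrs v, H w = 4 * H v := by
  have hset : {w : ℤ × ℤ | adj w v} = ↑(nbrs v) := by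
    ext w; simp [adj_iff]
  rw [← finsum_mem_coe_finset, ← hset, hH v]

lemma card_nbrs_le (v : ℤ × ℤ) : (nbrs v).card ≤ 4 := by
  unfold nbrs
  refine (Finset.card_insert_le _ _).trans ?_
  refine Nat.succ_le_succ ((Finset.card_insert_le _ _).trans ?_)
  refine Nat.succ_le_succ ((Finset.card_insert_le _ _).trans ?_)
  simp

lemma mem_nbrs_self (v : ℤ × ℤ) : (v.1 + 1, v.2) ∈ nbrs v := by
  simp [nbrs]

/-- The reduced Laplacian is injective (discrete maximum principle). -/
lemma lap_inj (Γ : Finset (ℤ × ℤ)) (f : ↥Γ → ℤ) (h : lap Γ f = 0) : f = 0 := by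
  by_contra hne
  obtain ⟨v₀, hv₀⟩ := Function.ne_iff.mp hne
  classical
  have hAne : (Γ.attach.image fun w => |f w|).Nonempty :=
    ⟨|f v₀|, Finset.mem_image_of_mem _ (Finset.mem_attach _ _)⟩
  set M := (Γ.attach.image fun w => |f w|).max' hAne with hMdef
  have hM : ∀ w : ↥Γ, |f w| ≤ M := by
    intro w
    exact Finset.le_max' (Γ.attach.image fun w => |f w|) (|f w|)
      (Finset.mem_image_of_mem _ (Finset.mem_attach _ _))
  have hMpos : 0 < M := lt_of_lt_of_le (abs_pos.mpr hv₀) (hM v₀)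
  have hTne : (Γ.attach.filter fun w => |f w| = M).Nonempty := by
    obtain ⟨w, hw, hweq⟩ :=
      Finset.mem_image.mp ((Γ.attach.image fun w => |f w|).max'_mem hAne)
    exact ⟨w, Finset.mem_filter.mpr ⟨hw, hweq⟩⟩
  obtain ⟨v, hvT, hvmax⟩ := Finset.exists_max_image _ (fun w : ↥Γ => w.1.1) hTne
  have hfv : |f v| = M := (Finset.mem_filter.mp hvT).2
  set F : ℤ × ℤ → ℤ := fun w => if h : w ∈ Γ then f ⟨w, h⟩ else 0 with hF
  have hFf : (fun w : ↥Γ => F w.1) = f := funext fun w => by simp [hF]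
  have hFle : ∀ w ∈ (nbrs v.1).filter (· ∈ Γ), |F w| ≤ M := by
    intro w hw
    have hwΓ : w ∈ Γ := (Finset.mem_filter.mp hw).2
    simpa [hF, hwΓ] using hM ⟨w, hwΓ⟩
  have hlap : (∑ w ∈ (nbrs v.1).filter (· ∈ Γ), F w) = 4 * f v := by
    have := lap_eq Γ F v
    have hFv : F v.1 = f v := congrFun hFf v
    rw [hFf, h, hFv] at this
    simp at this
    linarith [this]
  set w₀ : ℤ × ℤ := (v.1.1 + 1, v.1.2) with hw₀
  have hw₀nbrs : w₀ ∈ nbrs v.1 := mem_nbrs_self v.1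
  set S := (nbrs v.1).filter (· ∈ Γ) with hS
  have habs : 4 * M ≤ ∑ w ∈ S, |F w| := by
    calc 4 * M = |4 * f v| := by rw [abs_mul, hfv]; simp
    _ = |∑ w ∈ S, F w| := by rw [hlap]
    _ ≤ ∑ w ∈ S, |F w| := Finset.abs_sum_le_sum_abs _ _
  by_cases hw₀Γ : w₀ ∈ Γ
  · have hw₀S : w₀ ∈ S := Finset.mem_filter.mpr ⟨hw₀nbrs, hw₀Γ⟩
    have hlt : |F w₀| < M := by
      rcases lt_or_eq_of_le (hFle w₀ hw₀S) with h' | h'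
      · exact h'
      · exfalso
        have : (⟨w₀, hw₀Γ⟩ : ↥Γ) ∈ Γ.attach.filter fun w => |f w| = M := by
          refine Finset.mem_filter.mpr ⟨Finset.mem_attach _ _, ?_⟩
          simpa [hF, hw₀Γ] using h'
        have := hvmax _ this
        simp [hw₀] at this
    have hcard : (S.erase w₀).card ≤ 3 := by
      have h1 : (S.erase w₀).card ≤ ((nbrs v.1).erase w₀).card :=
        Finset.card_le_card (Finset.erase_subset_erase _ (Finset.filter_subset _ _))
      have h2 := Finset.card_erase_of_mem hw₀nbrs
      have := card_nbrs_le v.1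
      omega
    have hrest : ∑ w ∈ S.erase w₀, |F w| ≤ 3 * M := by
      calc ∑ w ∈ S.erase w₀, |F w| ≤ (S.erase w₀).card • M :=
            Finset.sum_le_card_nsmul _ _ _ (fun w hw => hFle w (Finset.mem_of_mem_erase hw))
      _ ≤ 3 * M := by
            rw [nsmul_eq_mul]
            have : ((S.erase w₀).card : ℤ) ≤ 3 := by exact_mod_cast hcard
            nlinarith
    rw [← Finset.add_sum_erase _ _ hw₀S] at habs
    omega
  · have hsub : S ⊆ (nbrs v.1).erase w₀ := by
      intro w hw
      refine Finset.mem_erase.mpr ⟨?_, (Finset.mem_filter.mp hw).1⟩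
      rintro rfl
      exact hw₀Γ (Finset.mem_filter.mp hw).2
    have hcard : S.card ≤ 3 := by
      have := Finset.card_le_card hsub
      have h2 := Finset.card_erase_of_mem hw₀nbrs
      have := card_nbrs_le v.1
      omega
    have : ∑ w ∈ S, |F w| ≤ 3 * M := by
      calc ∑ w ∈ S, |F w| ≤ S.card • M := Finset.sum_le_card_nsmul _ _ _ hFle
      _ ≤ 3 * M := by
            rw [nsmul_eq_mul]
            have : (S.card : ℤ) ≤ 3 := by exact_mod_cast hcard
            nlinarith
    omega

/-- Let `H : ℤ² → ℤ` be harmonic on all of `ℤ²`, `Γ ⊂ ℤ²` a finite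
nonempty convex domain and `n ≥ 2`. If the values of `H` on `Γ` have gcd `1` and
`n` divides `H(w)` for every `w ∈ ∂(ℤ² \ Γ)`, then `n` divides `Δ_Γ(H|_Γ)`
pointwise, and the element `C = [−(1/n)·Δ_Γ(H|_Γ)]` of the sandpile group has
additive order exactly `n`; in particular `{0, C, …, (n−1)C}` is a cyclic
subgroup of `G_Γ` of order `n`. -/
theorem harmonic_gives_cyclic_subgroup (H : ℤ × ℤ → ℤ) (hH : HarmonicZ2 H)
    (Γ : Finset (ℤ × ℤ)) (hne : Γ.Nonempty) (hconv : IsConvexDomain Γ)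
    (n : ℕ) (hn : 2 ≤ n)
    (hgcd : Finset.gcd Γ (fun v => H v) = 1)
    (hdiv : ∀ w : ℤ × ℤ, w ∉ Γ → (∃ v ∈ Γ, adj w v) → (n : ℤ) ∣ H w) :
    (∀ v : ↥Γ, (n : ℤ) ∣ lap Γ (fun v : ↥Γ => H v.1) v) ∧
    ∀ g : ↥Γ → ℤ, (∀ v : ↥Γ, (n : ℤ) * g v = lap Γ (fun v : ↥Γ => H v.1) v) →
      addOrderOf (sandMk Γ (-g)) = n ∧
      Nat.card ↥(AddSubgroup.zmultiples (sandMk Γ (-g))) = n := by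
  classical
  have hnpos : 0 < n := by omega
  constructor
  · intro v
    rw [lap_eq Γ H v]
    have hsplit := Finset.sum_filter_add_sum_filter_not (nbrs v.1) (· ∈ Γ) H
    have h4 : ∑ w ∈ nbrs v.1, H w = 4 * H v.1 := harm_sum H hH v.1
    have heq : (∑ w ∈ (nbrs v.1).filter (· ∈ Γ), H w) - 4 * H v.1
        = -(∑ w ∈ (nbrs v.1).filter (fun w => ¬ w ∈ Γ), H w) := by
      rw [← h4, ← hsplit]; ring
    rw [heq]
    refine dvd_neg.mpr (Finset.dvd_sum ?_)
    intro w hw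
    obtain ⟨hwn, hwΓ⟩ := Finset.mem_filter.mp hw
    exact hdiv w hwΓ ⟨v.1, v.2, (adj_iff w v.1).mpr hwn⟩
  · intro g hg
    set Hres : ↥Γ → ℤ := fun v => H v.1 with hHres
    have hlapH : lap Γ Hres = (n : ℤ) • g := by
      funext v
      rw [Pi.smul_apply, smul_eq_mul, hg v]
    have key : ∀ m : ℕ, m • sandMk Γ (-g) = 0 → n ∣ m := by
      intro m hm
      rw [← map_nsmul] at hm
      have hm' : (m • -g) ∈ (lapHom Γ).range := (QuotientAddGroup.eq_zero_iff _).mp hm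
      obtain ⟨f, hf⟩ := hm'
      have hf2 : lap Γ f = m • -g := hf
      have hf' : lap Γ (-f) = (m : ℤ) • g := by
        rw [lap_neg, hf2]
        funext v
        simp [natCast_zsmul]
      have hzero : lap Γ ((n : ℤ) • (-f) - (m : ℤ) • Hres) = 0 := by
        have : (n : ℤ) • (-f) - (m : ℤ) • Hres = (n : ℤ) • (-f) + (-((m : ℤ) • Hres)) := by
          ring
        rw [this, lap_add, lap_neg, lap_smul, lap_smul, hf', hlapH]
        rw [smul_comm]
        ring
      have := lap_inj Γ _ hzero
      have heqf : (n : ℤ) • (-f) = (m : ℤ) • Hres := sub_eq_zero.mp this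
      have hdvd : ∀ v ∈ Γ, (n : ℤ) ∣ (m : ℤ) * H v := by
        intro v hv
        have := congrFun heqf ⟨v, hv⟩
        simp only [Pi.smul_apply, smul_eq_mul, hHres] at this
        exact ⟨(-f) ⟨v, hv⟩, this.symm⟩
      have : (n : ℤ) ∣ Finset.gcd Γ (fun v => (m : ℤ) * H v) :=
        Finset.dvd_gcd hdvd
      rw [Finset.gcd_mul_left, hgcd, mul_one, Int.normalize_of_nonneg (by positivity)] at this
      exact_mod_cast this
    have hnC : n • sandMk Γ (-g) = 0 := by
      rw [← map_nsmul]
      refine (QuotientAddGroup.eq_zero_iff _).mpr ⟨-Hres, ?_⟩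
      show lap Γ (-Hres) = n • (-g)
      rw [lap_neg, hlapH]
      funext v; simp
    have hord : addOrderOf (sandMk Γ (-g)) = n := by
      have h1 : addOrderOf (sandMk Γ (-g)) ∣ n := addOrderOf_dvd_of_nsmul_eq_zero hnC
      have h2 : n ∣ addOrderOf (sandMk Γ (-g)) :=
        key _ (addOrderOf_nsmul_eq_zero _)
      exact Nat.dvd_antisymm h1 h2
    exact ⟨hord, by rw [Nat.card_zmultiples, hord]⟩
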